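/- Let X be a nonempty finite set, and let P, Q : X × X → ℝ be row-stochastic matrices (all entries nonnegative and every row sums to 1). Let r : X → ℝ with |r(x)| ≤ 1 for all x. Then for every natural number t: max_{x∈X} |(P^t r)(x) − (Q^t r)(x)| ≤ t · max_{x∈X} Σ_{x'∈X} |P(x,x') − Q(x,x')|, where P^t denotes the t-th matrix power and (P^t r)(x) = Σ_{x'} (P^t)(x,x')·r(x'). -/

import Mathlib

/-- The sup-norm difference between applying `t` steps of two Markov chains to a
bounded function is at most `t` times the maximal ℓ1-distance between
corresponding rows of the two transition matrices. -/
theorem stmt9 (X : Type*) [Fintype X] [DecidableEq X] [Nonempty X]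
    (P Q : Matrix X X ℝ)
    (hPnn : ∀ x x', 0 ≤ P x x') (hPsum : ∀ x, ∑ x', P x x' = 1)
    (hQnn : ∀ x x', 0 ≤ Q x x') (hQsum : ∀ x, ∑ x', Q x x' = 1)
    (r : X → ℝ) (hr : ∀ x, |r x| ≤ 1) (t : ℕ) :
    Finset.univ.sup' Finset.univ_nonempty
        (fun x : X => |(P ^ t).mulVec r x - (Q ^ t).mulVec r x|)
      ≤ (t : ℝ) * Finset.univ.sup' Finset.univ_nonempty
          (fun x : X => ∑ x', |P x x' - Q x x'|) := by
  set D := Finset.univ.sup' Finset.univ_nonempty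
      (fun x : X => ∑ x', |P x x' - Q x x'|) with hDdef
  have hpnn : ∀ (M : Matrix X X ℝ), (∀ x x', 0 ≤ M x x') →
      ∀ t x x', 0 ≤ (M ^ t) x x' := by
    intro M hM t
    induction t with
    | zero =>
      intro x x'
      simp only [pow_zero, Matrix.one_apply]
      split <;> norm_num
    | succ n ih =>
      intro x x'
      rw [pow_succ, Matrix.mul_apply]
      exact Finset.sum_nonneg fun a _ => mul_nonneg (ih x a) (hM a x')
  have hpsum : ∀ (M : Matrix X X ℝ), (∀ x, ∑ x', M x x' = 1) →
      ∀ t x, ∑ x', (M ^ t) x x' = 1 := by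
    intro M hM t
    induction t with
    | zero => intro x; simp [Matrix.one_apply]
    | succ n ih =>
      intro x
      simp only [pow_succ, Matrix.mul_apply]
      rw [Finset.sum_comm]
      have h : ∀ a ∈ Finset.univ, ∑ x', (M ^ n) x a * M a x' = (M ^ n) x a := by
        intro a _
        rw [← Finset.mul_sum, hM a, mul_one]
      rw [Finset.sum_congr rfl h, ih x]
  have hbound : ∀ (M : Matrix X X ℝ), (∀ x x', 0 ≤ M x x') →
      (∀ x, ∑ x', M x x' = 1) → ∀ x, |M.mulVec r x| ≤ 1 := by
    intro M h1 h2 x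
    have : M.mulVec r x = ∑ a, M x a * r a := rfl
    rw [this]
    calc |∑ a, M x a * r a| ≤ ∑ a, |M x a * r a| := Finset.abs_sum_le_sum_abs _ _
      _ ≤ ∑ a, M x a := by
          apply Finset.sum_le_sum
          intro a _
          rw [abs_mul, abs_of_nonneg (h1 x a)]
          calc M x a * |r a| ≤ M x a * 1 :=
                mul_le_mul_of_nonneg_left (hr a) (h1 x a)
            _ = M x a := mul_one _
      _ = 1 := h2 x
  induction t with
  | zero =>
    apply Finset.sup'_le
    intro x _
    simp [Matrix.one_mulVec]
  | succ n ih =>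
    apply Finset.sup'_le
    intro x _
    set f := (P ^ n).mulVec r with hf
    set g := (Q ^ n).mulVec r with hg
    have hfg : ∀ a, |f a - g a| ≤ (n : ℝ) * D := fun a =>
      le_trans (Finset.le_sup' (fun x : X => |f x - g x|) (Finset.mem_univ a)) ih
    have hga : ∀ a, |g a| ≤ 1 := hbound _ (hpnn Q hQnn n) (hpsum Q hQsum n)
    have e1 : (P ^ (n + 1)).mulVec r x = ∑ a, P x a * f a := by
      rw [pow_succ', ← Matrix.mulVec_mulVec]; rfl
    have e2 : (Q ^ (n + 1)).mulVec r x = ∑ a, Q x a * g a := by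
      rw [pow_succ', ← Matrix.mulVec_mulVec]; rfl
    have hDx : ∑ a, |P x a - Q x a| ≤ D :=
      Finset.le_sup' (fun x : X => ∑ x', |P x x' - Q x x'|) (Finset.mem_univ x)
    calc |(P ^ (n + 1)).mulVec r x - (Q ^ (n + 1)).mulVec r x|
        = |∑ a, (P x a * (f a - g a) + (P x a - Q x a) * g a)| := by
          rw [e1, e2, ← Finset.sum_sub_distrib]
          congr 1
          apply Finset.sum_congr rfl
          intros; ring
      _ ≤ ∑ a, |P x a * (f a - g a) + (P x a - Q x a) * g a| :=
          Finset.abs_sum_le_sum_abs _ _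
      _ ≤ ∑ a, (P x a * ((n : ℝ) * D) + |P x a - Q x a| * 1) := by
          apply Finset.sum_le_sum
          intro a _
          calc |P x a * (f a - g a) + (P x a - Q x a) * g a|
              ≤ |P x a * (f a - g a)| + |(P x a - Q x a) * g a| := abs_add_le _ _
            _ ≤ P x a * ((n : ℝ) * D) + |P x a - Q x a| * 1 := by
                rw [abs_mul, abs_mul, abs_of_nonneg (hPnn x a)]
                exact add_le_add
                  (mul_le_mul_of_nonneg_left (hfg a) (hPnn x a))
                  (mul_le_mul_of_nonneg_left (hga a) (abs_nonneg _))
      _ = (n : ℝ) * D + ∑ a, |P x a - Q x a| := by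
          rw [Finset.sum_add_distrib, ← Finset.sum_mul, hPsum x, one_mul]
          simp
      _ ≤ (n : ℝ) * D + D := by
          exact add_le_add_right hDx _
      _ = ((n + 1 : ℕ) : ℝ) * D := by push_cast; ring
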